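/- Let X be a real Banach space, let 0 < T < ∞, and let S : [0,∞) → L(X) be a strongly continuous semigroup: S(0) = I, S(a + b) = S(a) S(b) for all a, b ≥ 0, and t ↦ S(t)x is continuous on [0,∞) for every x ∈ X. Let v : (0,T) → X be strongly measurable and suppose that for every t ∈ [0,T) one has S(s − t) v(s) = 0 for almost every s ∈ (t,T). Then v(s) = 0 for almost every s ∈ (0,T). -/

import Mathlib

open MeasureTheory

/-- Let `S` be a strongly continuous semigroup on a Banach space
`X` and let `v : (0,T) → X` be strongly measurable. If for every `t ∈ [0,T)` one has
`S(s-t) v(s) = 0` for almost every `s ∈ (t,T)`, then `v = 0` almost everywhere on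
`(0,T)`. -/
theorem stmt_13
    {X : Type*} [NormedAddCommGroup X] [NormedSpace ℝ X] [CompleteSpace X]
    (T : ℝ) (hT : 0 < T)
    (S : ℝ → X →L[ℝ] X)
    (hS0 : S 0 = 1)
    (hSadd : ∀ a b : ℝ, 0 ≤ a → 0 ≤ b → S (a + b) = (S a).comp (S b))
    (hScont : ∀ x : X, ContinuousOn (fun t => S t x) (Set.Ici 0))
    (v : ℝ → X)
    (hv : AEStronglyMeasurable v (volume.restrict (Set.Ioo 0 T)))
    (hzero : ∀ t ∈ Set.Ico (0 : ℝ) T,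
      ∀ᵐ s ∂(volume.restrict (Set.Ioo t T)), S (s - t) (v s) = 0) :
    ∀ᵐ s ∂(volume.restrict (Set.Ioo 0 T)), v s = 0 := by
  have key : ∀ᵐ s ∂(volume.restrict (Set.Ioo 0 T)),
      ∀ q : ℚ, 0 ≤ (q : ℝ) → (q : ℝ) < T → s ∈ Set.Ioo (q : ℝ) T →
        S (s - q) (v s) = 0 := by
    rw [ae_all_iff]
    intro q
    by_cases hq0 : 0 ≤ (q : ℝ)
    · by_cases hqT : (q : ℝ) < T
      · have h := hzero q ⟨hq0, hqT⟩
        have h' := (ae_restrict_iff' measurableSet_Ioo).1 h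
        filter_upwards [ae_restrict_of_ae h'] with s hs _ _ hmem
        exact hs hmem
      · filter_upwards with s _ h; exact absurd h hqT
    · filter_upwards with s h; exact absurd h hq0
  filter_upwards [key, ae_restrict_mem measurableSet_Ioo] with s hq hs
  obtain ⟨hs0, hsT⟩ := hs
  -- choose rationals q n with max 0 (s - 1/(n+1)) < q n < s
  have hex : ∀ n : ℕ, ∃ q : ℚ, max 0 (s - 1/(n+1)) < (q : ℝ) ∧ (q : ℝ) < s := by
    intro n
    apply exists_rat_btwn
    apply max_lt hs0
    have : (0:ℝ) < 1/(n+1) := by positivity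
    linarith
  choose q hq1 hq2 using hex
  have hq0 : ∀ n, 0 ≤ (q n : ℝ) := fun n =>
    le_of_lt (lt_of_le_of_lt (le_max_left _ _) (hq1 n))
  have hnonneg : ∀ n, 0 ≤ s - q n := fun n => by linarith [hq2 n]
  have hub : ∀ n, s - q n ≤ 1/(n+1 : ℝ) := fun n => by
    have := lt_of_le_of_lt (le_max_right _ _) (hq1 n)
    linarith
  have htend0 : Filter.Tendsto (fun n : ℕ => s - q n) Filter.atTop (nhds 0) := by
    apply squeeze_zero hnonneg hub
    exact tendsto_one_div_add_atTop_nhds_zero_nat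
  have htendW : Filter.Tendsto (fun n : ℕ => s - q n) Filter.atTop
      (nhdsWithin 0 (Set.Ici 0)) := by
    rw [tendsto_nhdsWithin_iff]
    exact ⟨htend0, Filter.Eventually.of_forall hnonneg⟩
  have hcont := (hScont (v s) 0 (Set.self_mem_Ici)).tendsto
  have hcomp : Filter.Tendsto (fun n : ℕ => S (s - q n) (v s)) Filter.atTop
      (nhds (v s)) := by
    have := hcont.comp htendW
    simpa [hS0, Function.comp_def] using this
  have hzeroseq : (fun n : ℕ => S (s - q n) (v s)) = fun _ => (0 : X) := by
    funext n
    exact hq (q n) (hq0 n) (lt_trans (hq2 n) hsT) ⟨hq2 n, hsT⟩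
  rw [hzeroseq] at hcomp
  exact (tendsto_nhds_unique tendsto_const_nhds hcomp).symm
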